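/- With the oscillator operators L_n defined from the family (J_n) with parameters (λ, q), assume in addition that V carries a positive definite inner product ⟨·,·⟩ (conjugate linear in the first variable) such that ⟨ξ, J_n ψ⟩ = ⟨J_{−n} ξ, ψ⟩ for all ξ, ψ ∈ V and n ∈ ℤ. Then ⟨ξ, L_n ψ⟩ = ⟨L_{−n} ξ, ψ⟩ for all ξ, ψ ∈ V and n ∈ ℤ; that is, the representation of the Virasoro algebra defined by the L_n is unitary (hermitian). -/

import Mathlib

open scoped BigOperators

/-- Normal ordered product `:J_i J_j:`. -/
noncomputable def normalOrder {V : Type*} [AddCommGroup V] [Module ℂ V]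
    (J : ℤ → Module.End ℂ V) (i j : ℤ) : Module.End ℂ V :=
  if i ≤ j then J i * J j else J j * J i

/-- The oscillator Virasoro operator
`L_n v = δ_{n,0} (λ²/2) v + (1/2) Σ_{j ∈ ℤ} :J_{-j} J_{j+n}: v + iλn J_n v`. -/
noncomputable def oscL {V : Type*} [AddCommGroup V] [Module ℂ V]
    (J : ℤ → Module.End ℂ V) (l : ℝ) (n : ℤ) (v : V) : V :=
  (if n = 0 then (((l ^ 2 / 2 : ℝ) : ℂ)) • v else 0)
    + (1 / 2 : ℂ) • (∑ᶠ j : ℤ, normalOrder J (-j) (j + n) v)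
    + (Complex.I * (l : ℂ) * (n : ℂ)) • J n v

open scoped ComplexInnerProductSpace

lemma normalOrder_apply_eq_zero {V : Type*} [AddCommGroup V] [Module ℂ V]
    (J : ℤ → Module.End ℂ V) (ψ : V) (N : ℕ)
    (hN : ∀ m : ℤ, (N : ℤ) ≤ m → J m ψ = 0) (n j : ℤ)
    (h : (N : ℤ) ≤ j + n ∨ (N : ℤ) ≤ -j) :
    normalOrder J (-j) (j + n) ψ = 0 := by
  unfold normalOrder
  split_ifs with hle
  · have : (N : ℤ) ≤ j + n := by omega
    simp [Module.End.mul_apply, hN _ this]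
  · have : (N : ℤ) ≤ -j := by omega
    simp [Module.End.mul_apply, hN _ this]

lemma inner_normalOrder {V : Type*} [NormedAddCommGroup V] [InnerProductSpace ℂ V]
    (J : ℤ → Module.End ℂ V)
    (hadj : ∀ (ξ ψ : V) (n : ℤ), ⟪ξ, J n ψ⟫ = ⟪J (-n) ξ, ψ⟫)
    (ξ ψ : V) (n j : ℤ) :
    ⟪ξ, normalOrder J (-j) (j + n) ψ⟫ = ⟪normalOrder J (-(j + n)) ((j + n) + -n) ξ, ψ⟫ := by
  have hj : (j + n) + -n = j := by ring
  rw [hj]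
  unfold normalOrder
  by_cases h : -j ≤ j + n
  · rw [if_pos h, if_pos (by omega : -(j + n) ≤ j)]
    rw [Module.End.mul_apply, Module.End.mul_apply, hadj, neg_neg, hadj]
  · rw [if_neg h, if_neg (by omega : ¬ -(j + n) ≤ j)]
    rw [Module.End.mul_apply, Module.End.mul_apply, hadj, hadj, neg_neg]

open scoped ComplexInnerProductSpace in
/-- Unitarity of the oscillator representation: if `⟨ξ, J_n ψ⟩ = ⟨J_{-n} ξ, ψ⟩`
for all `n`, then `⟨ξ, L_n ψ⟩ = ⟨L_{-n} ξ, ψ⟩` for all `n`. -/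
theorem oscL_unitary {V : Type*} [NormedAddCommGroup V] [InnerProductSpace ℂ V]
    (l q : ℝ) (J : ℤ → Module.End ℂ V)
    (hJ0 : J 0 = (q : ℂ) • (1 : Module.End ℂ V))
    (hcomm : ∀ n m : ℤ, J n * J m - J m * J n =
      if n + m = 0 then (n : ℂ) • (1 : Module.End ℂ V) else 0)
    (hloc : ∀ v : V, ∃ N : ℕ, ∀ n : ℤ, (N : ℤ) ≤ n → J n v = 0)
    (hadj : ∀ (ξ ψ : V) (n : ℤ), ⟪ξ, J n ψ⟫ = ⟪J (-n) ξ, ψ⟫) :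
    ∀ (ξ ψ : V) (n : ℤ), ⟪ξ, oscL J l n ψ⟫ = ⟪oscL J l (-n) ξ, ψ⟫ := by
  intro ξ ψ n
  obtain ⟨N₁, h1⟩ := hloc ψ
  obtain ⟨N₂, h2⟩ := hloc ξ
  set A : ℤ := (N₁ : ℤ) + N₂ + |n| + 1 with hA
  have habs := abs_le.mp (le_refl |n|)
  -- finite-sum representations
  have hs1 : (∑ᶠ j : ℤ, normalOrder J (-j) (j + n) ψ)
      = ∑ j ∈ Finset.Ioo (-A) A, normalOrder J (-j) (j + n) ψ := by
    apply finsum_eq_finset_sum_of_support_subset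
    intro j hj
    simp only [Function.mem_support, ne_eq] at hj
    by_contra hmem
    simp only [Finset.coe_Ioo, Set.mem_Ioo, not_and_or, not_lt] at hmem
    exact hj (normalOrder_apply_eq_zero J ψ N₁ h1 n j (by omega))
  have hs2 : (∑ᶠ j : ℤ, normalOrder J (-j) (j + -n) ξ)
      = ∑ j ∈ Finset.Ioo (-A + n) (A + n), normalOrder J (-j) (j + -n) ξ := by
    apply finsum_eq_finset_sum_of_support_subset
    intro j hj
    simp only [Function.mem_support, ne_eq] at hj
    by_contra hmem
    simp only [Finset.coe_Ioo, Set.mem_Ioo, not_and_or, not_lt] at hmem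
    exact hj (normalOrder_apply_eq_zero J ξ N₂ h2 (-n) j (by omega))
  have hsum : ⟪ξ, ∑ᶠ j : ℤ, normalOrder J (-j) (j + n) ψ⟫
      = ⟪∑ᶠ j : ℤ, normalOrder J (-j) (j + -n) ξ, ψ⟫ := by
    rw [hs1, hs2, inner_sum, sum_inner]
    rw [show Finset.Ioo (-A + n) (A + n) = (Finset.Ioo (-A) A).map
        (addRightEmbedding n) from (Finset.map_add_right_Ioo _ _ _).symm]
    rw [Finset.sum_map]
    refine Finset.sum_congr rfl fun j _ => ?_
    simpa [addRightEmbedding] using inner_normalOrder J hadj ξ ψ n j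
  by_cases hn : n = 0
  · subst hn
    simp only [neg_zero, add_zero] at hsum
    simp [oscL, inner_add_right, inner_add_left, inner_smul_right, inner_smul_left,
      hsum, Complex.conj_ofReal, map_div₀, map_one, map_ofNat]
    ring
  · have hn' : ¬ (-n = 0) := by omega
    simp only [oscL, if_neg hn, if_neg hn', inner_add_right, inner_add_left,
      inner_smul_right, inner_smul_left, inner_zero_right, inner_zero_left, hsum,
      hadj ξ ψ n, map_mul, map_div₀, map_one, map_ofNat, Complex.conj_I,
      Complex.conj_ofReal, Int.cast_neg, map_neg, map_intCast]
    ring
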